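/- arXiv:1911.04790 — 4 statements merged into one kernel-verified Lean document; each statement's English description precedes it below -/
import Mathlib

section
/- Classification of differential exponential maps on ℝ: if e : ℝ → ℝ is differentiable, deriv e 0 = 1, and e (x + y) = deriv e x * e y for all x, y, then e 0 ≠ 0 and e x = e 0 * Real.exp (x / e 0) for all x. -/
theorem classification_of_differential_exponential_maps_on_real
    (e : ℝ → ℝ) (hd : Differentiable ℝ e)
    (h0 : deriv e 0 = 1)
    (hmul : ∀ x y : ℝ, e (x + y) = deriv e x * e y) :
    e 0 ≠ 0 ∧ ∀ x : ℝ, e x = e 0 * Real.exp (x / e 0) := by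
  set c := e 0 with hc
  have key : ∀ x, e x = deriv e x * c := by
    intro x
    have := hmul x 0
    simpa using this
  have hc0 : c ≠ 0 := by
    intro h
    have he0 : ∀ x, e x = 0 := fun x => by rw [key x, h, mul_zero]
    have : deriv e 0 = 0 := by
      have : e = fun _ => (0 : ℝ) := funext he0
      rw [this]; simp
    rw [h0] at this; norm_num at this
  refine ⟨hc0, ?_⟩
  have hderiv : ∀ x, deriv e x = e x / c := fun x => by
    field_simp [← key x]
    exact (key x).symm
  set g : ℝ → ℝ := fun x => e x * Real.exp (-(x / c)) with hg
  have hgderiv : ∀ x, HasDerivAt g 0 x := by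
    intro x
    have h1 : HasDerivAt e (e x / c) x := by
      have := (hd x).hasDerivAt
      rwa [hderiv x] at this
    have h2 : HasDerivAt (fun x : ℝ => Real.exp (-(x / c))) (Real.exp (-(x / c)) * (-(1 / c))) x := by
      have hin : HasDerivAt (fun x : ℝ => -(x / c)) (-(1 / c)) x := by
        simpa [Pi.neg_def] using ((hasDerivAt_id x).div_const c).neg
      simpa [Function.comp_def] using (Real.hasDerivAt_exp (-(x / c))).comp x hin
    have := h1.fun_mul h2
    refine this.congr_deriv ?_
    ring
  have hconst : ∀ x, g x = g 0 := by
    intro x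
    exact is_const_of_deriv_eq_zero (fun y => (hgderiv y).differentiableAt)
      (fun y => (hgderiv y).deriv) x 0
  intro x
  have := hconst x
  simp only [hg] at this
  have h0' : e 0 * Real.exp (-(0 / c)) = c := by simp [hc]
  rw [h0'] at this
  have hexp : Real.exp (-(x / c)) ≠ 0 := Real.exp_ne_zero _
  rw [Real.exp_neg] at this
  field_simp at this
  linarith [this]
end

section
/- The split-complex (hyperbolic) exponential F : ℝ × ℝ → ℝ × ℝ defined by F (x, y) = (exp x * cosh y, exp x * sinh y) is a differential exponential map: fderiv ℝ F (0, 0) is the identity map of ℝ × ℝ, and for all a b : ℝ × ℝ, fderiv ℝ F a (F b) = F (a + b). -/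
open Real ContinuousLinearMap

noncomputable def D (a : ℝ × ℝ) : (ℝ × ℝ) →L[ℝ] (ℝ × ℝ) :=
  ((Real.exp a.1 * Real.cosh a.2) • fst ℝ ℝ ℝ + (Real.exp a.1 * Real.sinh a.2) • snd ℝ ℝ ℝ).prod
  ((Real.exp a.1 * Real.sinh a.2) • fst ℝ ℝ ℝ + (Real.exp a.1 * Real.cosh a.2) • snd ℝ ℝ ℝ)

lemma hF (a : ℝ × ℝ) :
    HasFDerivAt (fun p : ℝ × ℝ => (Real.exp p.1 * Real.cosh p.2, Real.exp p.1 * Real.sinh p.2))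
      (D a) a := by
  have he : HasFDerivAt (fun p : ℝ × ℝ => Real.exp p.1)
      ((1 : ℝ →L[ℝ] ℝ).smulRight (Real.exp a.1) ∘L fst ℝ ℝ ℝ) a :=
    (Real.hasDerivAt_exp a.1).hasFDerivAt.comp a (hasFDerivAt_fst)
  have hc : HasFDerivAt (fun p : ℝ × ℝ => Real.cosh p.2)
      ((1 : ℝ →L[ℝ] ℝ).smulRight (Real.sinh a.2) ∘L snd ℝ ℝ ℝ) a :=
    (Real.hasDerivAt_cosh a.2).hasFDerivAt.comp a (hasFDerivAt_snd)
  have hs : HasFDerivAt (fun p : ℝ × ℝ => Real.sinh p.2)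
      ((1 : ℝ →L[ℝ] ℝ).smulRight (Real.cosh a.2) ∘L snd ℝ ℝ ℝ) a :=
    (Real.hasDerivAt_sinh a.2).hasFDerivAt.comp a (hasFDerivAt_snd)
  have h1 := he.mul hc
  have h2 := he.mul hs
  have := HasFDerivAt.prodMk h1 h2
  refine this.congr_fderiv ?_
  ext <;> simp [D] <;> ring

theorem split_complex_exp_is_differential_exponential_map :
    (fderiv ℝ (fun p : ℝ × ℝ => (Real.exp p.1 * Real.cosh p.2, Real.exp p.1 * Real.sinh p.2))
        ((0, 0) : ℝ × ℝ) = ContinuousLinearMap.id ℝ (ℝ × ℝ)) ∧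
    (∀ a b : ℝ × ℝ,
      fderiv ℝ (fun p : ℝ × ℝ => (Real.exp p.1 * Real.cosh p.2, Real.exp p.1 * Real.sinh p.2)) a
        (Real.exp b.1 * Real.cosh b.2, Real.exp b.1 * Real.sinh b.2) =
      (Real.exp (a + b).1 * Real.cosh (a + b).2, Real.exp (a + b).1 * Real.sinh (a + b).2)) := by
  constructor
  · rw [(hF (0,0)).fderiv]
    ext <;> simp [D]
  · intro a b
    rw [(hF a).fderiv]
    simp [D, Real.exp_add, Real.cosh_add, Real.sinh_add]
    constructor <;> ring
end

section
/- The dual-numbers exponential F : ℝ × ℝ → ℝ × ℝ defined by F (x, y) = (exp x, exp x * y) is a differential exponential map: fderiv ℝ F (0, 0) is the identity map of ℝ × ℝ, and for all a b : ℝ × ℝ, fderiv ℝ F a (F b) = F (a + b). -/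
open Real

lemma dual_exp_fderiv_apply (a v : ℝ × ℝ) :
    fderiv ℝ (fun p : ℝ × ℝ => (Real.exp p.1, Real.exp p.1 * p.2)) a v =
      (Real.exp a.1 * v.1, Real.exp a.1 * a.2 * v.1 + Real.exp a.1 * v.2) := by
  have h1 : HasFDerivAt (fun p : ℝ × ℝ => Real.exp p.1)
      (Real.exp a.1 • (ContinuousLinearMap.fst ℝ ℝ ℝ)) a :=
    (hasFDerivAt_fst (p := a)).exp
  have h2 : HasFDerivAt (fun p : ℝ × ℝ => Real.exp p.1 * p.2)
      (Real.exp a.1 • (ContinuousLinearMap.snd ℝ ℝ ℝ) +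
        a.2 • (Real.exp a.1 • (ContinuousLinearMap.fst ℝ ℝ ℝ))) a :=
    h1.mul (hasFDerivAt_snd (p := a))
  have h := h1.prodMk h2
  rw [h.fderiv]
  simp [ContinuousLinearMap.prod_apply]
  ring

theorem dual_numbers_exp_is_differential_exponential_map :
    (fderiv ℝ (fun p : ℝ × ℝ => (Real.exp p.1, Real.exp p.1 * p.2))
        ((0, 0) : ℝ × ℝ) = ContinuousLinearMap.id ℝ (ℝ × ℝ)) ∧
    (∀ a b : ℝ × ℝ,
      fderiv ℝ (fun p : ℝ × ℝ => (Real.exp p.1, Real.exp p.1 * p.2)) a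
        (Real.exp b.1, Real.exp b.1 * b.2) =
      (Real.exp (a + b).1, Real.exp (a + b).1 * (a + b).2)) := by
  constructor
  · ext <;> simp [dual_exp_fderiv_apply]
  · intro a b
    rw [dual_exp_fderiv_apply]
    simp [Real.exp_add, Prod.ext_iff]
    ring
end

section
/- If e₁ : ℝ → ℝ and e₂ : ℝ → ℝ are differentiable differential exponential maps, then the product map F : ℝ × ℝ → ℝ × ℝ defined by F (x, y) = (e₁ x, e₂ y) is a differential exponential map: fderiv ℝ F (0,0) is the identity, and fderiv ℝ F a (F b) = F (a + b) for all a b : ℝ × ℝ. -/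
lemma prod_fderiv_aux (e₁ e₂ : ℝ → ℝ)
    (hd₁ : Differentiable ℝ e₁) (hd₂ : Differentiable ℝ e₂) (a : ℝ × ℝ) :
    HasFDerivAt (fun p : ℝ × ℝ => (e₁ p.1, e₂ p.2))
      ((((1 : ℝ →L[ℝ] ℝ).smulRight (deriv e₁ a.1)).comp (ContinuousLinearMap.fst ℝ ℝ ℝ)).prod
       ((((1 : ℝ →L[ℝ] ℝ).smulRight (deriv e₂ a.2)).comp (ContinuousLinearMap.snd ℝ ℝ ℝ)))) a := by
  have h1 : HasFDerivAt (fun p : ℝ × ℝ => e₁ p.1)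
      (((1 : ℝ →L[ℝ] ℝ).smulRight (deriv e₁ a.1)).comp (ContinuousLinearMap.fst ℝ ℝ ℝ)) a :=
    ((hd₁ a.1).hasDerivAt.hasFDerivAt).comp a (hasFDerivAt_fst)
  have h2 : HasFDerivAt (fun p : ℝ × ℝ => e₂ p.2)
      (((1 : ℝ →L[ℝ] ℝ).smulRight (deriv e₂ a.2)).comp (ContinuousLinearMap.snd ℝ ℝ ℝ)) a :=
    ((hd₂ a.2).hasDerivAt.hasFDerivAt).comp a (hasFDerivAt_snd)
  exact HasFDerivAt.prodMk h1 h2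

theorem product_of_differential_exponential_maps
    (e₁ e₂ : ℝ → ℝ)
    (hd₁ : Differentiable ℝ e₁) (hd₂ : Differentiable ℝ e₂)
    (h0₁ : deriv e₁ 0 = 1) (h0₂ : deriv e₂ 0 = 1)
    (hm₁ : ∀ x y : ℝ, e₁ (x + y) = deriv e₁ x * e₁ y)
    (hm₂ : ∀ x y : ℝ, e₂ (x + y) = deriv e₂ x * e₂ y) :
    (fderiv ℝ (fun p : ℝ × ℝ => (e₁ p.1, e₂ p.2)) ((0, 0) : ℝ × ℝ)
      = ContinuousLinearMap.id ℝ (ℝ × ℝ)) ∧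
    (∀ a b : ℝ × ℝ,
      fderiv ℝ (fun p : ℝ × ℝ => (e₁ p.1, e₂ p.2)) a (e₁ b.1, e₂ b.2)
        = (e₁ (a + b).1, e₂ (a + b).2)) := by
  constructor
  · rw [(prod_fderiv_aux e₁ e₂ hd₁ hd₂ ((0,0) : ℝ × ℝ)).fderiv]
    ext <;> simp [h0₁, h0₂]
  · intro a b
    rw [(prod_fderiv_aux e₁ e₂ hd₁ hd₂ a).fderiv]
    simp [hm₁, hm₂, mul_comm]
end
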